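/- arXiv:1312.6602 — 5 statements merged into one kernel-verified Lean document; each statement's English description precedes it below -/
import Mathlib

section
/- Let A ⊆ ℝ and let f : ℝ × ℝ → ℝ. Suppose f preserves quasi-Cauchy double sequences from A × A, i.e., for every double sequence z : ℕ → ℕ → ℝ × ℝ with values in A × A that is quasi-Cauchy (with respect to the Euclidean distance), the real double sequence (k,l) ↦ f(z k l) is quasi-Cauchy. Then f is continuous at every point L ∈ A × A relative to A × A, i.e., for every L ∈ A × A and every ε > 0 there exists δ > 0 such that for all (u,v) ∈ A × A with dist((u,v), L) < δ one has |f(u,v) − f(L)| < ε. -/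
/-- The Euclidean distance on `ℝ × ℝ`. -/
noncomputable def euclDist (p q : ℝ × ℝ) : ℝ :=
  Real.sqrt ((p.1 - q.1) ^ 2 + (p.2 - q.2) ^ 2)

/-- A double sequence in `ℝ × ℝ` is quasi-Cauchy (w.r.t. the Euclidean distance). -/
def QuasiCauchyDouble2 (z : ℕ → ℕ → ℝ × ℝ) : Prop :=
  ∀ ε > (0 : ℝ), ∃ N : ℕ, ∀ k l : ℕ, N < k → N < l →
    euclDist (z k l) (z (k + 1) l) < ε ∧ euclDist (z k l) (z k (l + 1)) < ε ∧
      euclDist (z k l) (z (k + 1) (l + 1)) < ε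

/-- A real double sequence is quasi-Cauchy. -/
def QuasiCauchyDoubleReal (y : ℕ → ℕ → ℝ) : Prop :=
  ∀ ε > (0 : ℝ), ∃ N : ℕ, ∀ k l : ℕ, N < k → N < l →
    |y k l - y (k + 1) l| < ε ∧ |y k l - y k (l + 1)| < ε ∧
      |y k l - y (k + 1) (l + 1)| < ε

lemma euclDist_eq_complex (p q : ℝ × ℝ) :
    euclDist p q = dist (⟨p.1, p.2⟩ : ℂ) (⟨q.1, q.2⟩ : ℂ) := by
  rw [Complex.dist_eq, Complex.norm_def, Complex.normSq_apply, euclDist]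
  simp only [Complex.sub_re, Complex.sub_im]
  ring_nf

lemma euclDist_symm (p q : ℝ × ℝ) : euclDist p q = euclDist q p := by
  rw [euclDist_eq_complex, euclDist_eq_complex, dist_comm]

lemma euclDist_triangle (a b c : ℝ × ℝ) :
    euclDist a c ≤ euclDist a b + euclDist b c := by
  rw [euclDist_eq_complex, euclDist_eq_complex, euclDist_eq_complex]
  exact dist_triangle _ _ _

lemma euclDist_self (a : ℝ × ℝ) : euclDist a a = 0 := by
  simp [euclDist]

/-- If `f : ℝ × ℝ → ℝ` preserves quasi-Cauchy double sequences from
`A × A`, then `f` is continuous at every point of `A × A` relative to `A × A`. -/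
theorem quasiCauchy_preserving_implies_continuity
    (A : Set ℝ) (f : ℝ × ℝ → ℝ)
    (hqc : ∀ z : ℕ → ℕ → ℝ × ℝ, (∀ k l, z k l ∈ A ×ˢ A) →
      QuasiCauchyDouble2 z → QuasiCauchyDoubleReal (fun k l => f (z k l))) :
    ∀ L ∈ A ×ˢ A, ∀ ε > (0 : ℝ), ∃ δ > (0 : ℝ),
      ∀ p ∈ A ×ˢ A, euclDist p L < δ → |f p - f L| < ε := by
  intro L hL ε hε
  by_contra hcon
  push_neg at hcon
  have hp : ∀ n : ℕ, ∃ q : ℝ × ℝ, q ∈ A ×ˢ A ∧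
      euclDist q L < 1 / (n + 1) ∧ ε ≤ |f q - f L| := by
    intro n
    obtain ⟨q, h1, h2, h3⟩ := hcon (1 / (n + 1)) (by positivity)
    exact ⟨q, h1, h2, h3⟩
  choose p hpA hpd hpf using hp
  set z : ℕ → ℕ → ℝ × ℝ := fun k l => if (k + l) % 2 = 0 then L else p (k + l) with hz
  have hmem : ∀ k l, z k l ∈ A ×ˢ A := by
    intro k l
    by_cases h : (k + l) % 2 = 0 <;> simp [hz, h, hL, hpA]
  -- distance bound between any p n / L pair with n large
  have hdL : ∀ n N : ℕ, N ≤ n → euclDist (p n) L < 1 / (N + 1) := by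
    intro n N hn
    refine lt_of_lt_of_le (hpd n) ?_
    apply one_div_le_one_div_of_le (by positivity)
    have := (Nat.cast_le.mpr hn : (N:ℝ) ≤ n); linarith
  have hqc2 : QuasiCauchyDouble2 z := by
    intro ε' hε'
    obtain ⟨N, hN⟩ := exists_nat_gt (2 / ε')
    refine ⟨N, fun k l hk hl => ?_⟩
    have hNpos : (0 : ℝ) < N + 1 := by positivity
    have hbound : (1 : ℝ) / (N + 1) < ε' / 2 := by
      rw [div_lt_iff₀ hNpos]
      rw [div_lt_iff₀ hε'] at hN
      nlinarith
    have hm : N ≤ k + l := by omega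
    have key : ∀ m : ℕ, N ≤ m → euclDist (p m) L < ε' / 2 := fun m hmN =>
      lt_trans (hdL m N hmN) hbound
    have hhalf : ε' / 2 < ε' := by linarith
    by_cases h : (k + l) % 2 = 0
    · have h1 : (k + 1 + l) % 2 ≠ 0 := by omega
      have h2 : (k + (l + 1)) % 2 ≠ 0 := by omega
      have h3 : (k + 1 + (l + 1)) % 2 = 0 := by omega
      simp only [hz, h, h1, h2, h3, if_true, if_false, if_neg h1, if_neg h2, if_pos h3]
      refine ⟨?_, ?_, ?_⟩
      · rw [euclDist_symm]; exact lt_trans (key _ (by omega)) hhalf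
      · rw [euclDist_symm]; exact lt_trans (key _ (by omega)) hhalf
      · rw [euclDist_self]; linarith
    · have h1 : (k + 1 + l) % 2 = 0 := by omega
      have h2 : (k + (l + 1)) % 2 = 0 := by omega
      have h3 : (k + 1 + (l + 1)) % 2 ≠ 0 := by omega
      simp only [hz, if_neg h, if_pos h1, if_pos h2, if_neg h3]
      refine ⟨?_, ?_, ?_⟩
      · exact lt_trans (key _ (by omega)) hhalf
      · exact lt_trans (key _ (by omega)) hhalf
      · calc euclDist (p (k + l)) (p (k + 1 + (l + 1)))
            ≤ euclDist (p (k + l)) L + euclDist L (p (k + 1 + (l + 1))) :=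
              euclDist_triangle _ _ _
          _ < ε' / 2 + ε' / 2 := by
              refine add_lt_add (key _ (by omega)) ?_
              rw [euclDist_symm]; exact key _ (by omega)
          _ = ε' := by ring
  obtain ⟨N, hN⟩ := hqc z hmem hqc2 ε hε
  have h1 := (hN (N + 1) (N + 1) (Nat.lt_succ_self N) (Nat.lt_succ_self N)).1
  have he : ((N + 1) + (N + 1)) % 2 = 0 := by omega
  have ho : ((N + 1 + 1) + (N + 1)) % 2 ≠ 0 := by omega
  simp only [hz, if_pos he, if_neg ho] at h1
  have := hpf (N + 1 + 1 + (N + 1))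
  rw [abs_sub_comm] at h1
  linarith
end

section
/- Let I ⊆ ℝ be a nonempty interval (an order-connected subset of ℝ) and let f : ℝ × ℝ → ℝ. Then f is uniformly continuous on I × I (for every ε > 0 there exists δ > 0 such that for all (u,v), (u',v') ∈ I × I with dist((u,v),(u',v')) < δ one has |f(u,v) − f(u',v')| < ε) if and only if f preserves quasi-Cauchy double sequences from I × I, i.e., for every double sequence z : ℕ → ℕ → ℝ × ℝ with values in I × I that is quasi-Cauchy (with respect to the Euclidean distance), the real double sequence (k,l) ↦ f(z k l) is quasi-Cauchy. -/
namespace QCAux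

lemma euclDist_nonneg (a b : ℝ × ℝ) : 0 ≤ euclDist a b := Real.sqrt_nonneg _

lemma euclDist_self (a : ℝ × ℝ) : euclDist a a = 0 := by simp [euclDist]

lemma euclDist_add_smul (a d : ℝ × ℝ) (s s' : ℝ) :
    euclDist (a + s • d) (a + s' • d) = |s - s'| * euclDist d 0 := by
  simp only [euclDist, Prod.fst_add, Prod.snd_add, Prod.smul_fst, Prod.smul_snd,
    smul_eq_mul, Prod.fst_zero, Prod.snd_zero, sub_zero]
  rw [show a.1 + s * d.1 - (a.1 + s' * d.1) = (s - s') * d.1 by ring,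
      show a.2 + s * d.2 - (a.2 + s' * d.2) = (s - s') * d.2 by ring,
      mul_pow, mul_pow, ← mul_add, Real.sqrt_mul (sq_nonneg _), Real.sqrt_sq_eq_abs]

lemma euclDist_sub_zero (a b : ℝ × ℝ) : euclDist (b - a) 0 = euclDist a b := by
  simp only [euclDist, Prod.fst_sub, Prod.snd_sub, Prod.fst_zero, Prod.snd_zero, sub_zero]
  congr 1
  ring

variable (P Q : ℕ → ℝ × ℝ)

noncomputable def m (n : ℕ) : ℕ := max 1 ⌈euclDist (Q n) (P (n + 1)) * ((n : ℝ) + 1)⌉₊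

lemma m_pos (n : ℕ) : 0 < m P Q n := lt_of_lt_of_le Nat.one_pos (le_max_left _ _)

noncomputable def L (n : ℕ) : ℕ := m P Q n + 1

lemma two_le_L (n : ℕ) : 2 ≤ L P Q n := by
  have := m_pos P Q n; unfold L; omega

noncomputable def t : ℕ → ℕ
  | 0 => 0
  | n + 1 => t n + L P Q n

lemma t_strictMono : StrictMono (t P Q) := by
  apply strictMono_nat_of_lt_succ
  intro n
  have := two_le_L P Q n
  show t P Q n < t P Q n + L P Q n
  omega

lemma t_succ (n : ℕ) : t P Q (n + 1) = t P Q n + L P Q n := rfl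

noncomputable def w (n j : ℕ) : ℝ × ℝ :=
  Q n + ((j : ℝ) / (m P Q n : ℝ)) • (P (n + 1) - Q n)

lemma w_zero (n : ℕ) : w P Q n 0 = Q n := by simp [w]

lemma w_m (n : ℕ) : w P Q n (m P Q n) = P (n + 1) := by
  have h : (m P Q n : ℝ) ≠ 0 := by
    exact_mod_cast (m_pos P Q n).ne'
  simp [w, div_self h]

lemma euclDist_w (n j : ℕ) :
    euclDist (w P Q n j) (w P Q n (j + 1)) = euclDist (Q n) (P (n + 1)) / m P Q n := by
  have h : (0:ℝ) < (m P Q n : ℝ) := by exact_mod_cast m_pos P Q n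
  rw [w, w, euclDist_add_smul, euclDist_sub_zero]
  rw [show ((j : ℝ) / (m P Q n : ℝ) - ((j + 1 : ℕ) : ℝ) / (m P Q n : ℝ)) =
      -(1 / (m P Q n : ℝ)) by push_cast; field_simp; ring]
  rw [abs_neg, abs_of_pos (by positivity)]
  ring

lemma euclDist_w_le (n j : ℕ) :
    euclDist (w P Q n j) (w P Q n (j + 1)) ≤ 1 / ((n : ℝ) + 1) := by
  rw [euclDist_w]
  have hm : (0:ℝ) < (m P Q n : ℝ) := by exact_mod_cast m_pos P Q n
  rw [div_le_div_iff₀ hm (by positivity)]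
  have h1 : euclDist (Q n) (P (n + 1)) * ((n : ℝ) + 1) ≤
      (⌈euclDist (Q n) (P (n + 1)) * ((n : ℝ) + 1)⌉₊ : ℝ) := Nat.le_ceil _
  have h2 : ((⌈euclDist (Q n) (P (n + 1)) * ((n : ℝ) + 1)⌉₊ : ℕ) : ℝ) ≤ (m P Q n : ℝ) :=
    Nat.cast_le.mpr (le_max_right _ _)
  linarith

noncomputable def pt (n i : ℕ) : ℝ × ℝ := if i = 0 then P n else w P Q n (i - 1)

noncomputable def g : ℕ → ℕ × ℕ
  | 0 => (0, 0)
  | k + 1 =>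
    if (g k).2 + 1 < L P Q (g k).1 then ((g k).1, (g k).2 + 1) else ((g k).1 + 1, 0)

lemma g_inv (k : ℕ) : k = t P Q (g P Q k).1 + (g P Q k).2 ∧ (g P Q k).2 < L P Q (g P Q k).1 := by
  induction k with
  | zero => exact ⟨rfl, by have := two_le_L P Q 0; simpa [g] using by omega⟩
  | succ k ih =>
    obtain ⟨h1, h2⟩ := ih
    by_cases h : (g P Q k).2 + 1 < L P Q (g P Q k).1
    · rw [show g P Q (k+1) = ((g P Q k).1, (g P Q k).2 + 1) by rw [g]; simp [h]]
      exact ⟨by simpa using by omega, h⟩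
    · rw [show g P Q (k+1) = ((g P Q k).1 + 1, 0) by rw [g]; simp [h]]
      have he : (g P Q k).2 + 1 = L P Q (g P Q k).1 := by omega
      constructor
      · show k + 1 = t P Q ((g P Q k).1 + 1) + 0
        rw [t_succ]
        omega
      · show 0 < L P Q ((g P Q k).1 + 1)
        have := two_le_L P Q ((g P Q k).1 + 1); omega

lemma rep_unique {n i n' i' : ℕ} (h : t P Q n + i = t P Q n' + i')
    (hi : i < L P Q n) (hi' : i' < L P Q n') : n = n' ∧ i = i' := by
  rcases lt_trichotomy n n' with hlt | heq | hgt
  · exfalso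
    have h1 : t P Q n + i < t P Q (n + 1) := by rw [t_succ]; omega
    have h2 : t P Q (n + 1) ≤ t P Q n' := (t_strictMono P Q).monotone hlt
    omega
  · constructor
    · exact heq
    · subst heq; omega
  · exfalso
    have h1 : t P Q n' + i' < t P Q (n' + 1) := by rw [t_succ]; omega
    have h2 : t P Q (n' + 1) ≤ t P Q n := (t_strictMono P Q).monotone hgt
    omega

lemma g_t (n : ℕ) : g P Q (t P Q n) = (n, 0) := by
  obtain ⟨h1, h2⟩ := g_inv P Q (t P Q n)
  have := rep_unique P Q (n := (g P Q (t P Q n)).1) (n' := n) (i' := 0)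
    (by omega) h2 (by have := two_le_L P Q n; omega)
  obtain ⟨e1, e2⟩ := this
  exact Prod.ext e1 e2

lemma g_t_succ (n : ℕ) : g P Q (t P Q n + 1) = (n, 1) := by
  rw [g, g_t]
  have := two_le_L P Q n
  simp only
  rw [if_pos (by omega)]

noncomputable def x (k : ℕ) : ℝ × ℝ := pt P Q (g P Q k).1 (g P Q k).2

lemma x_t (n : ℕ) : x P Q (t P Q n) = P n := by
  rw [x, g_t]; simp [pt]

lemma x_t_succ (n : ℕ) : x P Q (t P Q n + 1) = Q n := by
  rw [x, g_t_succ]; simp [pt, w_zero]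

lemma step_le (hPQ : ∀ n, euclDist (P n) (Q n) < 1 / ((n : ℝ) + 1)) (k : ℕ) :
    euclDist (x P Q k) (x P Q (k + 1)) ≤ 1 / (((g P Q k).1 : ℝ) + 1) := by
  rcases hgk : g P Q k with ⟨n, i⟩
  obtain ⟨hk1, hk2⟩ := g_inv P Q k
  rw [hgk] at hk1 hk2
  dsimp only at hk1 hk2 ⊢
  by_cases h : i + 1 < L P Q n
  · have hg : g P Q (k + 1) = (n, i + 1) := by rw [g, hgk]; simp [h]
    rw [x, x, hg, hgk]
    rcases Nat.eq_zero_or_pos i with h0 | h0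
    · subst h0
      simp only [pt, if_pos rfl, if_neg (by omega : ¬ (0 + 1 = 0))]
      rw [show (0 + 1 - 1 : ℕ) = 0 from rfl, w_zero]
      exact (hPQ n).le
    · simp only [pt, if_neg (by omega : ¬ i = 0), if_neg (by omega : ¬ (i + 1 = 0))]
      rw [show i + 1 - 1 = (i - 1) + 1 by omega]
      exact euclDist_w_le P Q n (i - 1)
  · have he : i = m P Q n := by unfold L at h hk2; omega
    have hg : g P Q (k + 1) = (n + 1, 0) := by rw [g, hgk]; simp [h]
    rw [x, x, hg, hgk]
    have hm := m_pos P Q n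
    simp only [pt, if_neg (by omega : ¬ i = 0), if_pos rfl]
    rw [← w_m P Q n, he, show m P Q n = (m P Q n - 1) + 1 by omega]
    rw [show (m P Q n - 1) + 1 - 1 = m P Q n - 1 by omega]
    exact euclDist_w_le P Q n (m P Q n - 1)

lemma x_mem {S : Set (ℝ × ℝ)} (hconv : Convex ℝ S) (hP : ∀ n, P n ∈ S)
    (hQ : ∀ n, Q n ∈ S) (k : ℕ) : x P Q k ∈ S := by
  obtain ⟨hk1, hk2⟩ := g_inv P Q k
  rw [x]
  set n := (g P Q k).1
  set i := (g P Q k).2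
  rcases Nat.eq_zero_or_pos i with h0 | h0
  · simp [pt, h0, hP n]
  · simp only [pt, if_neg (by omega : ¬ i = 0)]
    set j := i - 1 with hj
    have hjm : j ≤ m P Q n := by unfold L at hk2; omega
    have hm : (0:ℝ) < (m P Q n : ℝ) := by exact_mod_cast m_pos P Q n
    set c : ℝ := (j : ℝ) / (m P Q n : ℝ) with hc
    have hc0 : 0 ≤ c := by positivity
    have hc1 : c ≤ 1 := by
      rw [hc, div_le_one hm]
      exact_mod_cast hjm
    have : w P Q n j = (1 - c) • Q n + c • P (n + 1) := by
      rw [w, ← hc]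
      module
    rw [this]
    exact hconv (hQ n) (hP (n + 1)) (by linarith) hc0 (by ring)

lemma blk_large (N k : ℕ) (hk : t P Q (N + 1) ≤ k) : N < (g P Q k).1 := by
  obtain ⟨h1, h2⟩ := g_inv P Q k
  by_contra hcon
  push_neg at hcon
  have : k < t P Q ((g P Q k).1 + 1) := by rw [t_succ]; omega
  have h3 : t P Q ((g P Q k).1 + 1) ≤ t P Q (N + 1) :=
    (t_strictMono P Q).monotone (by omega)
  omega

end QCAux


/-- For a nonempty interval `I ⊆ ℝ`, a function `f : ℝ × ℝ → ℝ` is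
uniformly continuous on `I × I` if and only if it preserves quasi-Cauchy double
sequences from `I × I`. -/
theorem uniformly_continuous_iff_preserves_quasiCauchy
    (I : Set ℝ) (hne : I.Nonempty) (hI : I.OrdConnected) (f : ℝ × ℝ → ℝ) :
    (∀ ε > (0 : ℝ), ∃ δ > (0 : ℝ), ∀ p ∈ I ×ˢ I, ∀ q ∈ I ×ˢ I,
      euclDist p q < δ → |f p - f q| < ε) ↔
    (∀ z : ℕ → ℕ → ℝ × ℝ, (∀ k l, z k l ∈ I ×ˢ I) →
      QuasiCauchyDouble2 z → QuasiCauchyDoubleReal (fun k l => f (z k l))) := by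
  constructor
  · intro hUC z hz hqc ε hε
    obtain ⟨δ, hδ, H⟩ := hUC ε hε
    obtain ⟨N, hN⟩ := hqc δ hδ
    refine ⟨N, fun k l hk hl => ?_⟩
    obtain ⟨h1, h2, h3⟩ := hN k l hk hl
    exact ⟨H _ (hz k l) _ (hz (k + 1) l) h1, H _ (hz k l) _ (hz k (l + 1)) h2,
      H _ (hz k l) _ (hz (k + 1) (l + 1)) h3⟩
  · intro hpres
    by_contra hUC
    push_neg at hUC
    obtain ⟨ε₀, hε₀, hbad⟩ := hUC
    have hsel : ∀ n : ℕ, ∃ p ∈ I ×ˢ I, ∃ q ∈ I ×ˢ I,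
        euclDist p q < 1 / ((n : ℝ) + 1) ∧ ε₀ ≤ |f p - f q| :=
      fun n => hbad (1 / ((n : ℝ) + 1)) (by positivity)
    choose P hP Q hQ hd hf using hsel
    have hconv : Convex ℝ (I ×ˢ I) :=
      (convex_iff_ordConnected.mpr hI).prod (convex_iff_ordConnected.mpr hI)
    set x := QCAux.x P Q with hx
    have hmem : ∀ k, x k ∈ I ×ˢ I := QCAux.x_mem P Q hconv hP hQ
    have hqc : QuasiCauchyDouble2 (fun k _ => x k) := by
      intro ε hε
      obtain ⟨N₀, hN₀⟩ := exists_nat_one_div_lt hε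
      refine ⟨QCAux.t P Q (N₀ + 1), fun k l hk hl => ?_⟩
      have hstep : euclDist (x k) (x (k + 1)) < ε := by
        have h1 := QCAux.step_le P Q hd k
        have h2 : N₀ < (QCAux.g P Q k).1 := QCAux.blk_large P Q N₀ k hk.le
        have hb : ((N₀ : ℝ) + 1) ≤ ((QCAux.g P Q k).1 : ℝ) := by exact_mod_cast h2
        have h3 : 1 / (((QCAux.g P Q k).1 : ℝ) + 1) ≤ 1 / ((N₀ : ℝ) + 1) :=
          one_div_le_one_div_of_le (by positivity) (by linarith)
        linarith
      refine ⟨hstep, ?_, hstep⟩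
      simpa [QCAux.euclDist_self] using hε
    have hy := hpres (fun k _ => x k) (fun k _ => hmem k) hqc
    obtain ⟨N, hN⟩ := hy ε₀ hε₀
    set k0 := QCAux.t P Q (N + 1) with hk0def
    have hk0 : N < k0 := lt_of_lt_of_le (Nat.lt_succ_self N) (QCAux.t_strictMono P Q).le_apply
    obtain ⟨h1, -, -⟩ := hN k0 k0 hk0 hk0
    have e1 : x k0 = P (N + 1) := QCAux.x_t P Q (N + 1)
    have e2 : x (k0 + 1) = Q (N + 1) := QCAux.x_t_succ P Q (N + 1)
    simp only at h1
    rw [e1, e2] at h1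
    exact absurd h1 (not_lt.mpr (hf (N + 1)))
end

section
/- Let A ⊆ ℝ and let f : ℝ × ℝ → ℝ be uniformly continuous on A × A, i.e., for every ε > 0 there exists δ > 0 such that for all (u,v), (u',v') ∈ A × A with dist((u,v),(u',v')) < δ one has |f(u,v) − f(u',v')| < ε. Then f preserves quasi-Cauchy double sequences from A × A: for every double sequence z : ℕ → ℕ → ℝ × ℝ with values in A × A that is quasi-Cauchy (with respect to the Euclidean distance), the real double sequence (k,l) ↦ f(z k l) is quasi-Cauchy. -/
/-- A function uniformly continuous on `A × A` preserves quasi-Cauchy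
double sequences from `A × A`. -/
theorem uniformly_continuous_preserves_quasiCauchy
    (A : Set ℝ) (f : ℝ × ℝ → ℝ)
    (huc : ∀ ε > (0 : ℝ), ∃ δ > (0 : ℝ), ∀ p ∈ A ×ˢ A, ∀ q ∈ A ×ˢ A,
      euclDist p q < δ → |f p - f q| < ε) :
    ∀ z : ℕ → ℕ → ℝ × ℝ, (∀ k l, z k l ∈ A ×ˢ A) →
      QuasiCauchyDouble2 z → QuasiCauchyDoubleReal (fun k l => f (z k l)) := by
  intro z hz hqc ε hε
  obtain ⟨δ, hδ, hδf⟩ := huc ε hε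
  obtain ⟨N, hN⟩ := hqc δ hδ
  refine ⟨N, fun k l hk hl => ?_⟩
  obtain ⟨h1, h2, h3⟩ := hN k l hk hl
  exact ⟨hδf _ (hz _ _) _ (hz _ _) h1, hδf _ (hz _ _) _ (hz _ _) h2,
    hδf _ (hz _ _) _ (hz _ _) h3⟩
end

section
/- Let I ⊆ ℝ be a nonempty bounded interval (a bounded order-connected subset of ℝ) and let f : ℝ × ℝ → ℝ. Then f is uniformly continuous on I × I (for every ε > 0 there exists δ > 0 such that for all (u,v), (u',v') ∈ I × I with dist((u,v),(u',v')) < δ one has |f(u,v) − f(u',v')| < ε) if and only if for every Cauchy double sequence z : ℕ → ℕ → ℝ × ℝ with values in I × I, the real double sequence (k,l) ↦ f(z k l) is quasi-Cauchy. -/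
/-- A double sequence in `ℝ × ℝ` is Cauchy (w.r.t. the Euclidean distance). -/
def CauchyDouble2 (z : ℕ → ℕ → ℝ × ℝ) : Prop :=
  ∀ ε > (0 : ℝ), ∃ N : ℕ, ∀ k l s t : ℕ, N < k → N < l → N < s → N < t →
    euclDist (z k l) (z s t) < ε

lemma dist_le_euclDist (p q : ℝ × ℝ) : dist p q ≤ euclDist p q := by
  rw [Prod.dist_eq, Real.dist_eq, Real.dist_eq, euclDist]
  have h1 : |p.1 - q.1| ≤ Real.sqrt ((p.1 - q.1) ^ 2 + (p.2 - q.2) ^ 2) := by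
    rw [← Real.sqrt_sq_eq_abs]
    exact Real.sqrt_le_sqrt (by nlinarith [sq_nonneg (p.2 - q.2)])
  have h2 : |p.2 - q.2| ≤ Real.sqrt ((p.1 - q.1) ^ 2 + (p.2 - q.2) ^ 2) := by
    rw [← Real.sqrt_sq_eq_abs]
    exact Real.sqrt_le_sqrt (by nlinarith [sq_nonneg (p.1 - q.1)])
  exact max_le h1 h2

lemma euclDist_le_two_dist (p q : ℝ × ℝ) : euclDist p q ≤ 2 * dist p q := by
  rw [Prod.dist_eq, Real.dist_eq, Real.dist_eq, euclDist]
  set m := max |p.1 - q.1| |p.2 - q.2| with hm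
  have h1 : |p.1 - q.1| ≤ m := le_max_left _ _
  have h2 : |p.2 - q.2| ≤ m := le_max_right _ _
  have hm0 : 0 ≤ m := le_trans (abs_nonneg _) h1
  have : Real.sqrt ((p.1 - q.1) ^ 2 + (p.2 - q.2) ^ 2) ≤ Real.sqrt ((2 * m) ^ 2) := by
    apply Real.sqrt_le_sqrt
    nlinarith [sq_abs (p.1 - q.1), sq_abs (p.2 - q.2), abs_nonneg (p.1 - q.1),
      abs_nonneg (p.2 - q.2)]
  calc Real.sqrt ((p.1 - q.1) ^ 2 + (p.2 - q.2) ^ 2) ≤ Real.sqrt ((2 * m) ^ 2) := this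
    _ = 2 * m := Real.sqrt_sq (by linarith)

/-- For a nonempty bounded interval `I ⊆ ℝ`, a function `f : ℝ × ℝ → ℝ`
is uniformly continuous on `I × I` if and only if the image under `f` of every Cauchy
double sequence in `I × I` is quasi-Cauchy. -/
theorem uniformly_continuous_iff_image_of_cauchy_is_quasiCauchy
    (I : Set ℝ) (hne : I.Nonempty) (hI : I.OrdConnected)
    (hbdd : Bornology.IsBounded I) (f : ℝ × ℝ → ℝ) :
    (∀ ε > (0 : ℝ), ∃ δ > (0 : ℝ), ∀ p ∈ I ×ˢ I, ∀ q ∈ I ×ˢ I,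
      euclDist p q < δ → |f p - f q| < ε) ↔
    (∀ z : ℕ → ℕ → ℝ × ℝ, (∀ k l, z k l ∈ I ×ˢ I) →
      CauchyDouble2 z → QuasiCauchyDoubleReal (fun k l => f (z k l))) := by
  constructor
  · intro huc z hz hcz ε hε
    obtain ⟨δ, hδ, hf⟩ := huc ε hε
    obtain ⟨N, hN⟩ := hcz δ hδ
    refine ⟨N, fun k l hk hl => ?_⟩
    refine ⟨hf _ (hz _ _) _ (hz _ _) (hN k l (k + 1) l hk hl (by omega) hl),
      hf _ (hz _ _) _ (hz _ _) (hN k l k (l + 1) hk hl hk (by omega)),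
      hf _ (hz _ _) _ (hz _ _) (hN k l (k + 1) (l + 1) hk hl (by omega) (by omega))⟩
  · intro h
    by_contra hc
    push_neg at hc
    obtain ⟨ε, hε, hcc⟩ := hc
    choose p hp q hq hpq hfpq using fun n : ℕ =>
      hcc (1 / (n + 1)) (by positivity)
    obtain ⟨a, -, φ, hφ, hconv⟩ :=
      tendsto_subseq_of_bounded (hbdd.prod hbdd) hp
    set z : ℕ → ℕ → ℝ × ℝ := fun k l => if Even k then p (φ l) else q (φ l) with hzdef
    have hz : ∀ k l, z k l ∈ I ×ˢ I := by
      intro k l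
      simp only [hzdef]
      split
      · exact hp _
      · exact hq _
    -- distance of q (φ l) to p (φ l) is small
    have hqp : ∀ l : ℕ, dist (q (φ l)) (p (φ l)) < 1 / (l + 1) := by
      intro l
      have h1 : dist (q (φ l)) (p (φ l)) ≤ euclDist (p (φ l)) (q (φ l)) := by
        rw [dist_comm]; exact dist_le_euclDist _ _
      have hle : (l : ℝ) ≤ φ l := by exact_mod_cast hφ.le_apply
      have h2 : (1 : ℝ) / (φ l + 1) ≤ 1 / (l + 1) := by
        apply one_div_le_one_div_of_le (by positivity)
        linarith
      exact lt_of_lt_of_le (lt_of_le_of_lt h1 (hpq (φ l))) h2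
    have hcz : CauchyDouble2 z := by
      intro ε' hε'
      rw [Metric.tendsto_atTop] at hconv
      obtain ⟨N1, hN1⟩ := hconv (ε' / 8) (by linarith)
      obtain ⟨N2, hN2⟩ := exists_nat_gt (8 / ε')
      -- bound each term's distance to a
      have key : ∀ k l : ℕ, max N1 N2 < l → dist (z k l) a < ε' / 4 := by
        intro k l hl
        have hl1 : N1 ≤ l := le_of_lt (lt_of_le_of_lt (le_max_left _ _) hl)
        have hl2 : N2 < l := lt_of_le_of_lt (le_max_right _ _) hl
        have hp_close : dist (p (φ l)) a < ε' / 8 := hN1 l hl1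
        have hsmall : (1 : ℝ) / (l + 1) < ε' / 8 := by
          rw [div_lt_div_iff₀ (by positivity) (by norm_num)]
          have : (8 : ℝ) / ε' < l + 1 := by
            have : (N2 : ℝ) < l + 1 := by exact_mod_cast by omega
            linarith [hN2.trans this]
          rw [div_lt_iff₀ hε'] at this
          linarith
        simp only [hzdef]
        split
        · linarith
        · calc dist (q (φ l)) a ≤ dist (q (φ l)) (p (φ l)) + dist (p (φ l)) a :=
              dist_triangle _ _ _
            _ < 1 / (l + 1) + ε' / 8 := by linarith [hqp l]
            _ < ε' / 4 := by linarith
      refine ⟨max N1 N2, fun k l s t _ hl _ ht => ?_⟩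
      calc euclDist (z k l) (z s t) ≤ 2 * dist (z k l) (z s t) :=
            euclDist_le_two_dist _ _
        _ ≤ 2 * (dist (z k l) a + dist (z s t) a) := by
            have := dist_triangle (z k l) a (z s t)
            rw [dist_comm a (z s t)] at this
            linarith
        _ < 2 * (ε' / 4 + ε' / 4) := by
            have := key k l hl
            have := key s t ht
            linarith
        _ = ε' := by ring
    obtain ⟨N, hN⟩ := h z hz hcz ε hε
    have hkl := (hN (2 * N + 2) (N + 1) (by omega) (by omega)).1
    have heven : Even (2 * N + 2) := ⟨N + 1, by ring⟩
    have hodd : ¬ Even (2 * N + 2 + 1) := by rw [Nat.even_iff]; omega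
    simp only [hzdef, if_pos heven, if_neg hodd] at hkl
    exact absurd hkl (not_lt.mpr (hfpq (φ (N + 1))))
end

section
/- Let X be a metric space whose distance satisfies the ultrametric (strong triangle) inequality: dist(x, y) ≤ max (dist(x, z), dist(y, z)) for all x, y, z ∈ X. Then X is non-incremental: every quasi-Cauchy double sequence in X is a Cauchy double sequence. -/
/-- If the metric of `X` satisfies the ultrametric (strong triangle)
inequality, then `X` is non-incremental: every quasi-Cauchy double sequence in `X`
is a Cauchy double sequence. -/
theorem ultrametric_is_non_incremental
    {X : Type*} [MetricSpace X]
    (hultra : ∀ x y z : X, dist x y ≤ max (dist x z) (dist y z)) :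
    ∀ w : ℕ → ℕ → X,
      (∀ ε > (0 : ℝ), ∃ N : ℕ, ∀ k l : ℕ, N < k → N < l →
        dist (w k l) (w (k + 1) l) < ε ∧ dist (w k l) (w k (l + 1)) < ε ∧
          dist (w k l) (w (k + 1) (l + 1)) < ε) →
      (∀ ε > (0 : ℝ), ∃ N : ℕ, ∀ k l s t : ℕ, N < k → N < l → N < s → N < t →
        dist (w k l) (w s t) < ε) := by
  intro w hqc ε hε
  obtain ⟨N, hN⟩ := hqc ε hε
  have key : ∀ k l : ℕ, N < k → N < l → dist (w (N+1) (N+1)) (w k l) < ε := by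
    have hrow : ∀ k : ℕ, N < k → dist (w (N+1) (N+1)) (w k (N+1)) < ε := by
      intro k hk
      induction k with
      | zero => omega
      | succ k ih =>
        rcases Nat.lt_or_ge N k with h | h
        · have h1 := ih h
          have h2 := (hN k (N+1) h (Nat.lt_succ_self N)).1
          calc dist (w (N+1) (N+1)) (w (k+1) (N+1))
              ≤ max (dist (w (N+1) (N+1)) (w k (N+1)))
                  (dist (w (k+1) (N+1)) (w k (N+1))) := hultra _ _ _
            _ < ε := by rw [dist_comm (w (k+1) (N+1))]; exact max_lt h1 h2
        · have : k = N := by omega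
          subst this
          simpa using hε
    intro k l hk hl
    induction l with
    | zero => omega
    | succ l ih =>
      rcases Nat.lt_or_ge N l with h | h
      · have h1 := ih h
        have h2 := (hN k l hk h).2.1
        calc dist (w (N+1) (N+1)) (w k (l+1))
            ≤ max (dist (w (N+1) (N+1)) (w k l)) (dist (w k (l+1)) (w k l)) := hultra _ _ _
          _ < ε := by rw [dist_comm (w k (l+1))]; exact max_lt h1 h2
      · have : l = N := by omega
        subst this
        exact hrow k hk
  refine ⟨N, fun k l s t hk hl hs ht => ?_⟩
  calc dist (w k l) (w s t)
      ≤ max (dist (w k l) (w (N+1) (N+1))) (dist (w s t) (w (N+1) (N+1))) := hultra _ _ _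
    _ < ε := by
      rw [dist_comm (w k l), dist_comm (w s t)]
      exact max_lt (key k l hk hl) (key s t hs ht)
end
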